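/- Let E be an ellipsoid in ℝ³ centered at the origin. Then ∫_{S²} h_E(θ) dθ = (4π / (3·vol(E))) · ∫_{S²} ρ_E(θ)⁴ dθ, where both integrals are with respect to the spherical Lebesgue measure on S². (Equivalently, the first intrinsic volume V₁(E) = (1/π)∫_{S²} h_E satisfies V₁(E) = 4 Ṽ₄(E) / V₃(E).) -/

import Mathlib

open MeasureTheory Real Set
open scoped RealInnerProductSpace ENNReal

noncomputable def sphereMeasure (n : ℕ) :
    Measure (Metric.sphere (0 : EuclideanSpace ℝ (Fin n)) 1) :=
  (volume : Measure (EuclideanSpace ℝ (Fin n))).toSphere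

noncomputable def radial {n : ℕ} (K : Set (EuclideanSpace ℝ (Fin n)))
    (x : EuclideanSpace ℝ (Fin n)) : ℝ :=
  sSup {t : ℝ | 0 ≤ t ∧ t • x ∈ K}

/-- The support function `h_K(x) = max_{y ∈ K} ⟨x, y⟩`. -/
noncomputable def suppFn {n : ℕ} (K : Set (EuclideanSpace ℝ (Fin n)))
    (x : EuclideanSpace ℝ (Fin n)) : ℝ :=
  sSup ((fun y => ⟪x, y⟫) '' K)

namespace EllipsoidAux

local notation "E3" => EuclideanSpace ℝ (Fin 3)

lemma lint_Ioi_pow_exp (n : ℕ) {c : ℝ} (hc : 0 < c) :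
    ∫⁻ r in Ioi (0:ℝ), ENNReal.ofReal (r ^ n * Real.exp (-(c * r))) =
      ENNReal.ofReal ((Nat.factorial n : ℝ) / c ^ (n + 1)) := by
  have hint : IntegrableOn (fun r : ℝ => r ^ n * Real.exp (-(c * r))) (Ioi 0) := by
    have h1 : IntegrableOn (fun x : ℝ => Real.exp (-x) * x ^ ((n + 1 : ℝ) - 1)) (Ioi 0) :=
      Real.GammaIntegral_convergent (by positivity)
    have h1' : IntegrableOn (fun x : ℝ => x ^ n * Real.exp (-x)) (Ioi 0) := by
      apply h1.congr_fun ?_ measurableSet_Ioi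
      intro x hx
      simp only [show ((n:ℝ) + 1) - 1 = (n : ℝ) by ring, Real.rpow_natCast]
      ring
    have h2 : IntegrableOn (fun x : ℝ => (c * x) ^ n * Real.exp (-(c * x))) (Ioi 0) := by
      have := (integrableOn_Ioi_comp_mul_left_iff
        (fun x : ℝ => x ^ n * Real.exp (-x)) 0 hc).2 (by simpa using h1')
      simpa using this
    have h3 : IntegrableOn
        (fun x : ℝ => (c * x) ^ n * Real.exp (-(c * x)) / c ^ n) (Ioi 0) :=
      h2.div_const ((c : ℝ) ^ n)
    apply h3.congr_fun ?_ measurableSet_Ioi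
    intro x _
    simp only [mul_pow]
    field_simp
  have hnn : 0 ≤ᵐ[volume.restrict (Ioi (0:ℝ))] fun r : ℝ => r ^ n * Real.exp (-(c * r)) := by
    filter_upwards [ae_restrict_mem measurableSet_Ioi] with r hr
    have : (0:ℝ) < r := hr
    positivity
  rw [← ofReal_integral_eq_lintegral_ofReal hint hnn]
  congr 1
  have heq : ∫ r in Ioi (0:ℝ), r ^ n * Real.exp (-(c * r))
      = ∫ r in Ioi (0:ℝ), r ^ ((n + 1 : ℝ) - 1) * Real.exp (-(c * r)) := by
    apply setIntegral_congr_fun measurableSet_Ioi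
    intro x _
    simp only [show ((n:ℝ) + 1) - 1 = (n : ℝ) by ring, Real.rpow_natCast]
  rw [heq, integral_rpow_mul_exp_neg_mul_Ioi (by positivity) hc,
    Real.Gamma_nat_eq_factorial,
    show ((n : ℝ) + 1) = ((n + 1 : ℕ) : ℝ) by push_cast; ring,
    Real.rpow_natCast, div_pow, one_pow]
  field_simp

lemma polar3 (g : E3 → ℝ≥0∞) (hg : Measurable g) :
    ∫⁻ x, g x ∂(volume : Measure E3) =
      ∫⁻ θ : Metric.sphere (0 : E3) 1, ∫⁻ r in Ioi (0:ℝ),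
        ENNReal.ofReal (r ^ 2) * g (r • (θ : E3)) ∂volume
        ∂(volume : Measure E3).toSphere := by
  have hdim : Module.finrank ℝ E3 - 1 = 2 := by rw [finrank_euclideanSpace_fin]
  have hcont : Continuous fun p : Metric.sphere (0 : E3) 1 × Ioi (0:ℝ) =>
      (p.2 : ℝ) • (p.1 : E3) :=
    (continuous_subtype_val.comp continuous_snd).smul
      (continuous_subtype_val.comp continuous_fst)
  have hF : Measurable fun p : Metric.sphere (0 : E3) 1 × Ioi (0:ℝ) =>
      g ((p.2 : ℝ) • (p.1 : E3)) := hg.comp hcont.measurable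
  calc ∫⁻ x, g x ∂(volume : Measure E3)
      = ∫⁻ x in ({0}ᶜ : Set E3), g x ∂volume := by
        rw [restrict_compl_singleton]
    _ = ∫⁻ x : ({0}ᶜ : Set E3), g x
          ∂((volume : Measure E3).comap Subtype.val) :=
        (lintegral_subtype_comap (measurableSet_singleton 0).compl g).symm
    _ = ∫⁻ x : ({0}ᶜ : Set E3),
          g (((homeomorphUnitSphereProd E3 x).2 : ℝ) •
            ((homeomorphUnitSphereProd E3 x).1 : E3))
          ∂((volume : Measure E3).comap Subtype.val) := by
        apply lintegral_congr
        intro x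
        congr 1
        simp only [homeomorphUnitSphereProd_apply_snd_coe,
          homeomorphUnitSphereProd_apply_fst_coe]
        rw [smul_inv_smul₀ (norm_ne_zero_iff.2 x.2)]
    _ = ∫⁻ p : Metric.sphere (0 : E3) 1 × Ioi (0:ℝ), g ((p.2 : ℝ) • (p.1 : E3))
          ∂((volume : Measure E3).toSphere.prod
            (Measure.volumeIoiPow (Module.finrank ℝ E3 - 1))) :=
        (Measure.measurePreserving_homeomorphUnitSphereProd
          (volume : Measure E3)).lintegral_comp hF
    _ = ∫⁻ θ : Metric.sphere (0 : E3) 1, ∫⁻ r : Ioi (0:ℝ), g ((r : ℝ) • (θ : E3))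
          ∂(Measure.volumeIoiPow 2) ∂(volume : Measure E3).toSphere := by
        rw [hdim]
        exact lintegral_prod _ hF.aemeasurable
    _ = _ := by
        apply lintegral_congr
        intro θ
        rw [Measure.volumeIoiPow]
        have hdens : Measurable fun r : Ioi (0:ℝ) => ENNReal.ofReal ((r : ℝ) ^ 2) :=
          (measurable_subtype_coe.pow_const 2).ennreal_ofReal
        have hmeas : Measurable fun r : Ioi (0:ℝ) => g ((r : ℝ) • (θ : E3)) :=
          hg.comp ((continuous_subtype_val.smul continuous_const).measurable)
        rw [lintegral_withDensity_eq_lintegral_mul _ hdens hmeas]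
        have h2 := lintegral_subtype_comap (μ := (volume : Measure ℝ))
          (measurableSet_Ioi (a := (0:ℝ)))
          (fun r : ℝ => ENNReal.ofReal (r ^ 2) * g (r • (θ : E3)))
        simp only [Pi.mul_apply]
        exact h2

lemma lint_comp_linearEquiv (A : E3 ≃ₗ[ℝ] E3) (g : E3 → ℝ≥0∞) (hg : Measurable g) :
    ∫⁻ x, g x ∂(volume : Measure E3) =
      ENNReal.ofReal |LinearMap.det (A.toLinearMap)| *
        ∫⁻ y, g (A y) ∂(volume : Measure E3) := by
  have hdet : LinearMap.det A.toLinearMap ≠ 0 := A.isUnit_det'.ne_zero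
  have hmeasA : Measurable (A.toLinearMap : E3 → E3) :=
    A.toLinearMap.continuous_of_finiteDimensional.measurable
  have hmap := Measure.map_linearMap_addHaar_eq_smul_addHaar (volume : Measure E3) hdet
  have h1 : ∫⁻ y, g (A y) ∂(volume : Measure E3)
      = ∫⁻ x, g x ∂(Measure.map (A.toLinearMap : E3 → E3) volume) :=
    (lintegral_map hg hmeasA).symm
  rw [h1, hmap, lintegral_smul_measure, smul_eq_mul, ← mul_assoc,
    ← ENNReal.ofReal_mul (abs_nonneg _), abs_inv,
    mul_inv_cancel₀ (abs_ne_zero.2 hdet)]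
  simp

lemma lint_comp_isometry (R : E3 ≃ₗᵢ[ℝ] E3) (g : E3 → ℝ≥0∞) (hg : Measurable g) :
    ∫⁻ x, g (R x) ∂(volume : Measure E3) = ∫⁻ x, g x ∂(volume : Measure E3) :=
  R.measurePreserving.lintegral_comp hg

lemma lint_norm_exp (B : E3 →ₗ[ℝ] E3) :
    ∫⁻ x, ENNReal.ofReal (‖B x‖ * Real.exp (-‖x‖)) ∂(volume : Measure E3)
      = ENNReal.ofReal 6 *
        ∫⁻ θ : Metric.sphere (0:E3) 1, ENNReal.ofReal ‖B (θ : E3)‖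
          ∂(volume : Measure E3).toSphere := by
  have hBc : Continuous (B : E3 → E3) := B.continuous_of_finiteDimensional
  have hg : Measurable fun x : E3 => ENNReal.ofReal (‖B x‖ * Real.exp (-‖x‖)) :=
    ((hBc.norm.mul ((continuous_norm.neg).rexp))).measurable.ennreal_ofReal
  rw [polar3 _ hg]
  have hinner : ∀ θ : Metric.sphere (0:E3) 1,
      ∫⁻ r in Ioi (0:ℝ), ENNReal.ofReal (r ^ 2) *
        ENNReal.ofReal (‖B (r • (θ : E3))‖ * Real.exp (-‖r • (θ : E3)‖))
      = ENNReal.ofReal ‖B (θ : E3)‖ * ENNReal.ofReal 6 := by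
    intro θ
    have hθ : ‖(θ : E3)‖ = 1 := mem_sphere_zero_iff_norm.1 θ.2
    have step : ∀ᵐ r ∂(volume.restrict (Ioi (0:ℝ))),
        ENNReal.ofReal (r ^ 2) *
          ENNReal.ofReal (‖B (r • (θ : E3))‖ * Real.exp (-‖r • (θ : E3)‖))
        = ENNReal.ofReal ‖B (θ : E3)‖ * ENNReal.ofReal (r ^ 3 * Real.exp (-(1 * r))) := by
      filter_upwards [ae_restrict_mem measurableSet_Ioi] with r hr
      have hr0 : (0:ℝ) < r := hr
      rw [LinearMap.map_smul, norm_smul, norm_smul, Real.norm_eq_abs, abs_of_pos hr0, hθ, mul_one,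
        ← ENNReal.ofReal_mul (by positivity), ← ENNReal.ofReal_mul (norm_nonneg _)]
      congr 1
      ring
    rw [lintegral_congr_ae step, lintegral_const_mul _ (by
      exact (((measurable_id.pow_const 3).mul
        (Real.measurable_exp.comp (measurable_id.const_mul 1).neg))).ennreal_ofReal),
      lint_Ioi_pow_exp 3 one_pos]
    norm_num [Nat.factorial]
  rw [lintegral_congr hinner]
  rw [lintegral_mul_const' _ _ (by simp)]
  exact mul_comm _ _

noncomputable def e1 : E3 := EuclideanSpace.single (0 : Fin 3) (1:ℝ)

lemma norm_e1 : ‖(e1 : E3)‖ = 1 := by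
  rw [e1, EuclideanSpace.norm_single]
  norm_num

lemma cont_inner_exp (w : E3) :
    Continuous fun y : E3 => |⟪w, y⟫| * Real.exp (-‖y‖) :=
  ((continuous_const.inner continuous_id).abs).mul ((continuous_norm.neg).rexp)

noncomputable def kappa : ℝ≥0∞ :=
  ∫⁻ y, ENNReal.ofReal (|⟪(e1 : E3), y⟫| * Real.exp (-‖y‖)) ∂(volume : Measure E3)

lemma lint_abs_inner (v : E3) :
    ∫⁻ y, ENNReal.ofReal (|⟪v, y⟫| * Real.exp (-‖y‖)) ∂(volume : Measure E3)
      = kappa * ENNReal.ofReal ‖v‖ := by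
  rcases eq_or_ne v 0 with rfl | hv
  · simp
  · have hv' : (0:ℝ) < ‖v‖ := norm_pos_iff.2 hv
    set u : E3 := ‖v‖⁻¹ • v with hu_def
    have hu : ‖u‖ = 1 := by
      rw [hu_def, norm_smul, Real.norm_eq_abs, abs_of_pos (by positivity),
        inv_mul_cancel₀ hv'.ne']
    have h1 : ∀ y : E3, |⟪v, y⟫| = ‖v‖ * |⟪u, y⟫| := by
      intro y
      have : ⟪v, y⟫ = ‖v‖ * ⟪u, y⟫ := by
        rw [hu_def, real_inner_smul_left]
        field_simp
      rw [this, abs_mul, abs_of_pos hv']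
    have h2 : ∫⁻ y, ENNReal.ofReal (|⟪v, y⟫| * Real.exp (-‖y‖)) ∂(volume : Measure E3)
        = ENNReal.ofReal ‖v‖ *
          ∫⁻ y, ENNReal.ofReal (|⟪u, y⟫| * Real.exp (-‖y‖)) ∂(volume : Measure E3) := by
      rw [← lintegral_const_mul _ (cont_inner_exp u).measurable.ennreal_ofReal]
      apply lintegral_congr
      intro y
      rw [h1 y, ← ENNReal.ofReal_mul (norm_nonneg v), mul_assoc]
    have h3 : ∫⁻ y, ENNReal.ofReal (|⟪u, y⟫| * Real.exp (-‖y‖)) ∂(volume : Measure E3)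
        = kappa := by
      set R : E3 ≃ₗᵢ[ℝ] E3 := Submodule.reflection (ℝ ∙ (u - e1))ᗮ with hR_def
      have hRu : R u = e1 := Submodule.reflection_sub (by rw [hu, norm_e1])
      have key : ∀ y : E3, ENNReal.ofReal (|⟪u, y⟫| * Real.exp (-‖y‖))
          = ENNReal.ofReal (|⟪e1, R y⟫| * Real.exp (-‖R y‖)) := by
        intro y
        rw [← hRu]
        rw [R.inner_map_map u y, R.norm_map]
      calc ∫⁻ y, ENNReal.ofReal (|⟪u, y⟫| * Real.exp (-‖y‖)) ∂(volume : Measure E3)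
          = ∫⁻ y, ENNReal.ofReal (|⟪e1, R y⟫| * Real.exp (-‖R y‖))
              ∂(volume : Measure E3) := lintegral_congr key
        _ = kappa := lint_comp_isometry R _ (cont_inner_exp e1).measurable.ennreal_ofReal
    rw [h2, h3, mul_comm]

lemma kappa_ne_top : kappa ≠ ⊤ := by
  have hb : kappa ≤ ∫⁻ y, ENNReal.ofReal (‖(LinearMap.id (R := ℝ)) y‖ * Real.exp (-‖y‖))
      ∂(volume : Measure E3) := by
    apply lintegral_mono
    intro y
    apply ENNReal.ofReal_le_ofReal
    apply mul_le_mul_of_nonneg_right _ (Real.exp_nonneg _)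
    calc |⟪(e1 : E3), y⟫| ≤ ‖(e1 : E3)‖ * ‖y‖ := abs_real_inner_le_norm _ _
    _ = ‖y‖ := by rw [norm_e1, one_mul]
  rw [lint_norm_exp] at hb
  intro htop
  rw [htop] at hb
  have : (∫⁻ θ : Metric.sphere (0:E3) 1, ENNReal.ofReal ‖(LinearMap.id (R := ℝ)) (θ : E3)‖
      ∂(volume : Measure E3).toSphere) ≤ ENNReal.ofReal 1 * (volume : Measure E3).toSphere univ := by
    rw [← lintegral_const]
    apply lintegral_mono
    intro θ
    simp only [LinearMap.id_coe, id_eq]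
    apply ENNReal.ofReal_le_ofReal
    exact le_of_eq (mem_sphere_zero_iff_norm.1 θ.2)
  have hfin : ENNReal.ofReal 6 * ∫⁻ θ : Metric.sphere (0:E3) 1,
      ENNReal.ofReal ‖(LinearMap.id (R := ℝ)) (θ : E3)‖ ∂(volume : Measure E3).toSphere ≠ ⊤ := by
    apply ENNReal.mul_ne_top ENNReal.ofReal_ne_top
    exact ne_top_of_le_ne_top (ENNReal.mul_ne_top ENNReal.ofReal_ne_top (measure_ne_top _ _)) this
  exact hfin (top_le_iff.1 hb)

lemma kappa_ne_zero : kappa ≠ 0 := by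
  intro h0
  have hmeas := (cont_inner_exp e1).measurable.ennreal_ofReal
  rw [kappa, lintegral_eq_zero_iff hmeas] at h0
  -- a.e. y, the integrand vanishes; but it is positive off a hyperplane
  set K : Submodule ℝ E3 := LinearMap.ker (innerₛₗ ℝ (e1 : E3)) with hK_def
  have hKne : K ≠ ⊤ := by
    intro hK
    have : ⟪(e1 : E3), e1⟫ = 0 := by
      have : (e1 : E3) ∈ K := by rw [hK]; trivial
      simpa [hK_def] using this
    rw [real_inner_self_eq_norm_sq, norm_e1] at this
    norm_num at this
  have hK0 : (volume : Measure E3) (K : Set E3) = 0 :=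
    Measure.addHaar_submodule _ _ hKne
  have hae : ∀ᵐ y : E3 ∂volume, y ∉ (K : Set E3) := by
    rw [ae_iff]
    simpa using hK0
  have : ∀ᵐ y : E3 ∂volume, False := by
    filter_upwards [h0, hae] with y hy1 hy2
    apply hy2
    simp only [Pi.zero_apply] at hy1
    rw [ENNReal.ofReal_eq_zero] at hy1
    have hexp : 0 < Real.exp (-‖y‖) := Real.exp_pos _
    have habs : |⟪(e1 : E3), y⟫| ≤ 0 := by nlinarith [abs_nonneg ⟪(e1 : E3), y⟫]
    have : ⟪(e1 : E3), y⟫ = 0 := abs_eq_zero.1 (le_antisymm habs (abs_nonneg _))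
    simpa [hK_def] using this
  have hne : (volume : Measure E3) ≠ 0 := by
    intro h
    have := Metric.measure_ball_pos (volume : Measure E3) (0 : E3) one_pos
    rw [h] at this
    simp at this
  have hbot := this
  rw [Filter.eventually_false_iff_eq_bot] at hbot
  exact (MeasureTheory.ae_neBot.2 hne).ne hbot

lemma double_eq (B : E3 →ₗ[ℝ] E3) :
    kappa * ∫⁻ x, ENNReal.ofReal (‖B x‖ * Real.exp (-‖x‖)) ∂(volume : Measure E3)
      = ∫⁻ x, ∫⁻ y, ENNReal.ofReal (Real.exp (-‖x‖)) *
          ENNReal.ofReal (|⟪B x, y⟫| * Real.exp (-‖y‖))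
          ∂(volume : Measure E3) ∂(volume : Measure E3) := by
  have hBc : Continuous (B : E3 → E3) := B.continuous_of_finiteDimensional
  have hmeas : Measurable fun x : E3 => ENNReal.ofReal (‖B x‖ * Real.exp (-‖x‖)) :=
    ((hBc.norm.mul ((continuous_norm.neg).rexp))).measurable.ennreal_ofReal
  rw [← lintegral_const_mul _ hmeas]
  apply lintegral_congr
  intro x
  have h1 : ∫⁻ y, ENNReal.ofReal (Real.exp (-‖x‖)) *
      ENNReal.ofReal (|⟪B x, y⟫| * Real.exp (-‖y‖)) ∂(volume : Measure E3)
      = ENNReal.ofReal (Real.exp (-‖x‖)) * (kappa * ENNReal.ofReal ‖B x‖) := by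
    rw [lintegral_const_mul _ (cont_inner_exp (B x)).measurable.ennreal_ofReal,
      lint_abs_inner (B x)]
  rw [h1, ENNReal.ofReal_mul (norm_nonneg _)]
  ring

lemma lint_norm_exp_adjoint (A : E3 ≃ₗ[ℝ] E3) :
    ∫⁻ x, ENNReal.ofReal (‖(LinearMap.adjoint A.toLinearMap) x‖ * Real.exp (-‖x‖))
        ∂(volume : Measure E3)
      = ∫⁻ x, ENNReal.ofReal (‖A.toLinearMap x‖ * Real.exp (-‖x‖))
        ∂(volume : Measure E3) := by
  have hAc : Continuous (A.toLinearMap : E3 → E3) :=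
    A.toLinearMap.continuous_of_finiteDimensional
  refine (ENNReal.mul_right_inj kappa_ne_zero kappa_ne_top).mp ?_
  rw [double_eq (LinearMap.adjoint A.toLinearMap)]
  have hpt : ∀ x y : E3, ENNReal.ofReal (Real.exp (-‖x‖)) *
      ENNReal.ofReal (|⟪(LinearMap.adjoint A.toLinearMap) x, y⟫| * Real.exp (-‖y‖))
      = ENNReal.ofReal (Real.exp (-‖x‖)) *
        ENNReal.ofReal (|⟪A.toLinearMap y, x⟫| * Real.exp (-‖y‖)) := by
    intro x y
    congr 2
    rw [LinearMap.adjoint_inner_left, real_inner_comm]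
  have hswap : ∫⁻ x, ∫⁻ y, ENNReal.ofReal (Real.exp (-‖x‖)) *
        ENNReal.ofReal (|⟪A.toLinearMap y, x⟫| * Real.exp (-‖y‖))
        ∂(volume : Measure E3) ∂(volume : Measure E3)
      = ∫⁻ y, ∫⁻ x, ENNReal.ofReal (Real.exp (-‖x‖)) *
        ENNReal.ofReal (|⟪A.toLinearMap y, x⟫| * Real.exp (-‖y‖))
        ∂(volume : Measure E3) ∂(volume : Measure E3) := by
    apply lintegral_lintegral_swap
    apply Measurable.aemeasurable
    apply Measurable.mul (f := fun p : E3 × E3 => ENNReal.ofReal (Real.exp (-‖p.1‖)))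
      (g := fun p : E3 × E3 => ENNReal.ofReal (|⟪A.toLinearMap p.2, p.1⟫| * Real.exp (-‖p.2‖)))
    · exact ((continuous_norm.comp continuous_fst).neg.rexp).measurable.ennreal_ofReal
    · have hc : Continuous fun p : E3 × E3 => |⟪A.toLinearMap p.2, p.1⟫| * Real.exp (-‖p.2‖) := by
        have : Continuous fun p : E3 × E3 => ⟪A.toLinearMap p.2, p.1⟫ :=
          continuous_inner.comp ((hAc.comp continuous_snd).prodMk continuous_fst)
        exact this.abs.mul ((continuous_norm.comp continuous_snd).neg.rexp)
      exact hc.measurable.ennreal_ofReal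
  calc ∫⁻ x, ∫⁻ y, ENNReal.ofReal (Real.exp (-‖x‖)) *
        ENNReal.ofReal (|⟪(LinearMap.adjoint A.toLinearMap) x, y⟫| * Real.exp (-‖y‖))
        ∂(volume : Measure E3) ∂(volume : Measure E3)
      = ∫⁻ y, ∫⁻ x, ENNReal.ofReal (Real.exp (-‖x‖)) *
        ENNReal.ofReal (|⟪A.toLinearMap y, x⟫| * Real.exp (-‖y‖))
        ∂(volume : Measure E3) ∂(volume : Measure E3) := by
        rw [← hswap]
        exact lintegral_congr fun x => lintegral_congr fun y => hpt x y
    _ = ∫⁻ y, ENNReal.ofReal (Real.exp (-‖y‖)) * (kappa * ENNReal.ofReal ‖A.toLinearMap y‖)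
        ∂(volume : Measure E3) := by
        apply lintegral_congr
        intro y
        have h2 : ∀ x : E3, ENNReal.ofReal (Real.exp (-‖x‖)) *
            ENNReal.ofReal (|⟪A.toLinearMap y, x⟫| * Real.exp (-‖y‖))
            = ENNReal.ofReal (Real.exp (-‖y‖)) *
              ENNReal.ofReal (|⟪A.toLinearMap y, x⟫| * Real.exp (-‖x‖)) := by
          intro x
          rw [← ENNReal.ofReal_mul (Real.exp_nonneg _), ← ENNReal.ofReal_mul (Real.exp_nonneg _)]
          congr 1
          ring
        rw [lintegral_congr h2,
          lintegral_const_mul _ (cont_inner_exp (A.toLinearMap y)).measurable.ennreal_ofReal,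
          lint_abs_inner]
    _ = ∫⁻ y, kappa * ENNReal.ofReal (‖A.toLinearMap y‖ * Real.exp (-‖y‖))
          ∂(volume : Measure E3) := by
        apply lintegral_congr
        intro y
        rw [ENNReal.ofReal_mul (norm_nonneg _)]
        ring
    _ = kappa * ∫⁻ x, ENNReal.ofReal (‖A.toLinearMap x‖ * Real.exp (-‖x‖))
          ∂(volume : Measure E3) := by
        exact lintegral_const_mul _
          ((hAc.norm.mul ((continuous_norm.neg).rexp))).measurable.ennreal_ofReal
    _ = kappa * ∫⁻ x, ENNReal.ofReal (‖A.toLinearMap x‖ * Real.exp (-‖x‖))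
          ∂(volume : Measure E3) := rfl

lemma sphere_adjoint (A : E3 ≃ₗ[ℝ] E3) :
    ∫⁻ θ : Metric.sphere (0:E3) 1, ENNReal.ofReal ‖(LinearMap.adjoint A.toLinearMap) (θ : E3)‖
        ∂(volume : Measure E3).toSphere
      = ∫⁻ θ : Metric.sphere (0:E3) 1, ENNReal.ofReal ‖A.toLinearMap (θ : E3)‖
        ∂(volume : Measure E3).toSphere := by
  refine (ENNReal.mul_right_inj (a := ENNReal.ofReal 6) (by norm_num) ENNReal.ofReal_ne_top).mp ?_
  rw [← lint_norm_exp, ← lint_norm_exp, lint_norm_exp_adjoint]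

lemma sphere_norm_lint_ne_top (B : E3 →ₗ[ℝ] E3) :
    ∫⁻ θ : Metric.sphere (0:E3) 1, ENNReal.ofReal ‖B (θ : E3)‖
        ∂(volume : Measure E3).toSphere ≠ ⊤ := by
  set C : ℝ := ‖LinearMap.toContinuousLinearMap B‖ with hC
  have hb : ∫⁻ θ : Metric.sphere (0:E3) 1, ENNReal.ofReal ‖B (θ : E3)‖
      ∂(volume : Measure E3).toSphere ≤ ENNReal.ofReal C * (volume : Measure E3).toSphere univ := by
    rw [← lintegral_const]
    apply lintegral_mono
    intro θ
    apply ENNReal.ofReal_le_ofReal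
    calc ‖B (θ : E3)‖ = ‖(LinearMap.toContinuousLinearMap B) (θ : E3)‖ := by
          rw [LinearMap.coe_toContinuousLinearMap']
      _ ≤ C * ‖(θ : E3)‖ := (LinearMap.toContinuousLinearMap B).le_opNorm _
      _ = C := by rw [mem_sphere_zero_iff_norm.1 θ.2, mul_one]
  exact ne_top_of_le_ne_top
    (ENNReal.mul_ne_top ENNReal.ofReal_ne_top (measure_ne_top _ _)) hb

lemma key_identity (A : E3 ≃ₗ[ℝ] E3) :
    ∫⁻ θ : Metric.sphere (0:E3) 1, ENNReal.ofReal ((‖A.symm (θ : E3)‖ ^ 4)⁻¹)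
        ∂(volume : Measure E3).toSphere
      = ENNReal.ofReal |LinearMap.det A.toLinearMap| *
        ∫⁻ θ : Metric.sphere (0:E3) 1,
          ENNReal.ofReal ‖(LinearMap.adjoint A.toLinearMap) (θ : E3)‖
          ∂(volume : Measure E3).toSphere := by
  have hAc : Continuous (A.toLinearMap : E3 → E3) :=
    A.toLinearMap.continuous_of_finiteDimensional
  have hAsc : Continuous (A.symm.toLinearMap : E3 → E3) :=
    A.symm.toLinearMap.continuous_of_finiteDimensional
  set g : E3 → ℝ≥0∞ := fun x =>
    ENNReal.ofReal ((‖A.symm x‖ ^ 4)⁻¹ * (‖x‖ ^ 3 * Real.exp (-‖x‖))) with hg_def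
  have hgm : Measurable g := by
    apply Measurable.ennreal_ofReal
    exact ((hAsc.norm.pow 4).measurable.inv).mul
      ((continuous_norm.pow 3).mul ((continuous_norm.neg).rexp)).measurable
  have ha : ∫⁻ x, g x ∂(volume : Measure E3)
      = ∫⁻ θ : Metric.sphere (0:E3) 1, ENNReal.ofReal ((‖A.symm (θ : E3)‖ ^ 4)⁻¹)
          ∂(volume : Measure E3).toSphere := by
    rw [polar3 _ hgm]
    apply lintegral_congr
    intro θ
    have hθ : ‖(θ : E3)‖ = 1 := mem_sphere_zero_iff_norm.1 θ.2
    have hθ0 : (θ : E3) ≠ 0 := by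
      intro h; rw [h] at hθ; simp at hθ
    have hc : 0 < ‖A.symm (θ : E3)‖ := by
      rw [norm_pos_iff]; simp [hθ0]
    have step : ∀ᵐ r ∂(volume.restrict (Ioi (0:ℝ))),
        ENNReal.ofReal (r ^ 2) * g (r • (θ : E3))
        = ENNReal.ofReal ((‖A.symm (θ : E3)‖ ^ 4)⁻¹) *
            ENNReal.ofReal (r ^ 1 * Real.exp (-(1 * r))) := by
      filter_upwards [ae_restrict_mem measurableSet_Ioi] with r hr
      have hr0 : (0:ℝ) < r := hr
      rw [hg_def]
      simp only [LinearEquiv.map_smul, norm_smul, Real.norm_eq_abs, abs_of_pos hr0, hθ, mul_one]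
      rw [← ENNReal.ofReal_mul (by positivity), ← ENNReal.ofReal_mul (by positivity)]
      congr 1
      field_simp
    rw [lintegral_congr_ae step, lintegral_const_mul _ (by
        exact ((measurable_id.pow_const 1).mul
          (Real.measurable_exp.comp (measurable_id.const_mul 1).neg)).ennreal_ofReal),
      lint_Ioi_pow_exp 1 one_pos]
    norm_num [Nat.factorial]
  have hb : ∫⁻ x, g x ∂(volume : Measure E3)
      = ENNReal.ofReal |LinearMap.det A.toLinearMap| *
        ∫⁻ θ : Metric.sphere (0:E3) 1, ENNReal.ofReal ‖A.toLinearMap (θ : E3)‖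
          ∂(volume : Measure E3).toSphere := by
    rw [lint_comp_linearEquiv A g hgm]
    congr 1
    have hcomp : Measurable fun y : E3 => g (A y) := hgm.comp hAc.measurable
    rw [polar3 _ hcomp]
    apply lintegral_congr
    intro θ
    have hθ : ‖(θ : E3)‖ = 1 := mem_sphere_zero_iff_norm.1 θ.2
    have hθ0 : (θ : E3) ≠ 0 := by
      intro h; rw [h] at hθ; simp at hθ
    have hc : 0 < ‖A.toLinearMap (θ : E3)‖ := by
      rw [norm_pos_iff]
      simp only [LinearEquiv.coe_coe]
      intro h
      exact hθ0 (by simpa using congrArg A.symm h)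
    have step : ∀ᵐ r ∂(volume.restrict (Ioi (0:ℝ))),
        ENNReal.ofReal (r ^ 2) * g (A (r • (θ : E3)))
        = ENNReal.ofReal (‖A.toLinearMap (θ : E3)‖ ^ 3) *
            ENNReal.ofReal (r ^ 1 * Real.exp (-(‖A.toLinearMap (θ : E3)‖ * r))) := by
      filter_upwards [ae_restrict_mem measurableSet_Ioi] with r hr
      have hr0 : (0:ℝ) < r := hr
      rw [hg_def]
      simp only [LinearEquiv.map_smul, LinearEquiv.symm_apply_apply, norm_smul,
        Real.norm_eq_abs, abs_of_pos hr0, hθ, mul_one]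
      rw [← ENNReal.ofReal_mul (by positivity), ← ENNReal.ofReal_mul (by positivity)]
      congr 1
      have : ‖A.toLinearMap (θ : E3)‖ = ‖A (θ : E3)‖ := rfl
      field_simp
      rw [this]
    rw [lintegral_congr_ae step, lintegral_const_mul _ (by
        exact ((measurable_id.pow_const 1).mul
          (Real.measurable_exp.comp (measurable_id.const_mul _).neg)).ennreal_ofReal),
      lint_Ioi_pow_exp 1 hc]
    rw [← ENNReal.ofReal_mul (by positivity)]
    congr 1
    rw [Nat.factorial_one]
    have hne : ‖A ((θ : E3))‖ ≠ 0 := hc.ne'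
    field_simp
    ring
  rw [← ha, hb, sphere_adjoint]


lemma sSup_inner_closedBall (v : E3) :
    sSup ((fun y => ⟪v, y⟫) '' Metric.closedBall (0 : E3) 1) = ‖v‖ := by
  apply IsGreatest.csSup_eq
  constructor
  · rcases eq_or_ne v 0 with rfl | hv
    · exact ⟨0, by simp⟩
    · refine ⟨‖v‖⁻¹ • v, ?_, ?_⟩
      · simp [Metric.mem_closedBall, norm_smul, abs_of_nonneg, inv_mul_cancel₀ (norm_ne_zero_iff.2 hv)]
      · show ⟪v, ‖v‖⁻¹ • v⟫ = ‖v‖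
        rw [real_inner_smul_right, real_inner_self_eq_norm_sq, sq,
          inv_mul_cancel_left₀ (norm_ne_zero_iff.2 hv)]
  · rintro t ⟨y, hy, rfl⟩
    simp only [Metric.mem_closedBall, dist_zero_right] at hy
    calc ⟪v, y⟫ ≤ ‖v‖ * ‖y‖ := real_inner_le_norm v y
    _ ≤ ‖v‖ * 1 := by gcongr
    _ = ‖v‖ := mul_one _

lemma suppFn_ellipsoid (A : E3 ≃ₗ[ℝ] E3) (x : E3) :
    suppFn (A '' Metric.closedBall (0 : E3) 1) x
      = ‖LinearMap.adjoint A.toLinearMap x‖ := by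
  rw [suppFn, Set.image_image]
  rw [← sSup_inner_closedBall (LinearMap.adjoint A.toLinearMap x)]
  congr 1
  apply Set.image_congr
  intro y _
  rw [LinearMap.adjoint_inner_left]
  rfl

lemma radial_ellipsoid (A : E3 ≃ₗ[ℝ] E3) (θ : E3) (hθ : ‖θ‖ = 1) :
    radial (A '' Metric.closedBall (0 : E3) 1) θ = ‖A.symm θ‖⁻¹ := by
  have hθ0 : θ ≠ 0 := by intro h; rw [h] at hθ; simp at hθ
  have hc : 0 < ‖A.symm θ‖ := by
    rw [norm_pos_iff]
    simp [hθ0]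
  have hset : {t : ℝ | 0 ≤ t ∧ t • θ ∈ A '' Metric.closedBall (0 : E3) 1}
      = Icc 0 (‖A.symm θ‖⁻¹) := by
    ext t
    simp only [mem_setOf_eq, mem_Icc, LinearEquiv.image_eq_preimage_symm, mem_preimage,
      Metric.mem_closedBall, dist_zero_right, LinearEquiv.map_smul, norm_smul,
      Real.norm_eq_abs]
    constructor
    · rintro ⟨ht, h2⟩
      refine ⟨ht, ?_⟩
      rw [abs_of_nonneg ht, ← le_div_iff₀ hc] at h2
      simpa [one_div] using h2
    · rintro ⟨ht, h2⟩
      refine ⟨ht, ?_⟩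
      rw [abs_of_nonneg ht, ← le_div_iff₀ hc]
      simpa [one_div] using h2
  rw [radial, hset, csSup_Icc (by positivity)]

lemma volume_ball3 : (volume (Metric.closedBall (0 : E3) 1)).toReal = 4 * π / 3 := by
  rw [EuclideanSpace.volume_closedBall]
  have h3 : (Fintype.card (Fin 3) : ℝ) = 3 := by simp
  rw [show (Fintype.card (Fin 3)) = 3 from by simp]
  have hG : Real.Gamma ((3 : ℝ) / 2 + 1) = 3 / 4 * Real.sqrt π := by
    rw [Real.Gamma_add_one (by norm_num)]
    have : (3 : ℝ) / 2 = 1 / 2 + 1 := by norm_num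
    rw [this, Real.Gamma_add_one (by norm_num), Real.Gamma_one_half_eq]
    ring
  have hs : Real.sqrt π ^ 3 = π * Real.sqrt π := by
    have := Real.sq_sqrt (le_of_lt Real.pi_pos)
    nlinarith [Real.sqrt_nonneg π]
  have hsp : Real.sqrt π > 0 := Real.sqrt_pos.2 Real.pi_pos
  have : Real.sqrt π ^ 3 / Real.Gamma ((3 : ℝ) / 2 + 1) = 4 * π / 3 := by
    rw [hG, hs]
    field_simp
  push_cast
  rw [this]
  simp [ENNReal.toReal_mul, ENNReal.toReal_ofReal (by positivity : (0:ℝ) ≤ 4 * π / 3)]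

end EllipsoidAux

/-- For a centered ellipsoid `E ⊆ ℝ³`:
`∫_{S²} h_E dθ = (4π / (3 vol(E))) ∫_{S²} ρ_E⁴ dθ`; equivalently `V₁(E) = 4 Ṽ₄(E)/V₃(E)`. -/
theorem first_intrinsic_volume_eq_dual_volume_four
    (A : EuclideanSpace ℝ (Fin 3) ≃ₗ[ℝ] EuclideanSpace ℝ (Fin 3))
    (E : Set (EuclideanSpace ℝ (Fin 3)))
    (hE : E = A '' Metric.closedBall (0 : EuclideanSpace ℝ (Fin 3)) 1) :
    (∫ θ : Metric.sphere (0 : EuclideanSpace ℝ (Fin 3)) 1,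
        suppFn E (θ : EuclideanSpace ℝ (Fin 3)) ∂(sphereMeasure 3)) =
      4 * Real.pi / (3 * (volume E).toReal) *
        ∫ θ : Metric.sphere (0 : EuclideanSpace ℝ (Fin 3)) 1,
          radial E (θ : EuclideanSpace ℝ (Fin 3)) ^ 4 ∂(sphereMeasure 3) := by
  have hdet0 : LinearMap.det A.toLinearMap ≠ 0 := A.isUnit_det'.ne_zero
  have hdetpos : 0 < |LinearMap.det A.toLinearMap| := abs_pos.2 hdet0
  set d : ℝ := |LinearMap.det A.toLinearMap| with hd
  have hAsc : Continuous (A.symm.toLinearMap : EuclideanSpace ℝ (Fin 3) → EuclideanSpace ℝ (Fin 3)) :=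
    A.symm.toLinearMap.continuous_of_finiteDimensional
  have hsm : sphereMeasure 3 = (volume : Measure (EuclideanSpace ℝ (Fin 3))).toSphere := rfl
  have hsupp : ∀ θ : Metric.sphere (0 : EuclideanSpace ℝ (Fin 3)) 1,
      suppFn E (θ : EuclideanSpace ℝ (Fin 3))
        = ‖(LinearMap.adjoint A.toLinearMap) (θ : EuclideanSpace ℝ (Fin 3))‖ := fun θ => by
    rw [hE, EllipsoidAux.suppFn_ellipsoid]
  have hrad : ∀ θ : Metric.sphere (0 : EuclideanSpace ℝ (Fin 3)) 1,
      radial E (θ : EuclideanSpace ℝ (Fin 3)) ^ 4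
        = (‖A.symm (θ : EuclideanSpace ℝ (Fin 3))‖ ^ 4)⁻¹ := fun θ => by
    rw [hE, EllipsoidAux.radial_ellipsoid A _ (mem_sphere_zero_iff_norm.1 θ.2), inv_pow]
  rw [hsm, integral_congr_ae (Filter.Eventually.of_forall hsupp),
    integral_congr_ae (Filter.Eventually.of_forall hrad)]
  have hIm : AEStronglyMeasurable
      (fun θ : Metric.sphere (0 : EuclideanSpace ℝ (Fin 3)) 1 =>
        ‖(LinearMap.adjoint A.toLinearMap) (θ : EuclideanSpace ℝ (Fin 3))‖)
      ((volume : Measure (EuclideanSpace ℝ (Fin 3))).toSphere) :=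
    ((((LinearMap.adjoint A.toLinearMap).continuous_of_finiteDimensional).comp
      continuous_subtype_val).norm).aestronglyMeasurable
  have hPm : AEStronglyMeasurable
      (fun θ : Metric.sphere (0 : EuclideanSpace ℝ (Fin 3)) 1 =>
        (‖A.symm (θ : EuclideanSpace ℝ (Fin 3))‖ ^ 4)⁻¹)
      ((volume : Measure (EuclideanSpace ℝ (Fin 3))).toSphere) :=
    (((hAsc.comp continuous_subtype_val).norm.pow 4).measurable.inv).aestronglyMeasurable
  rw [integral_eq_lintegral_of_nonneg_ae (Filter.Eventually.of_forall fun θ => norm_nonneg _) hIm,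
    integral_eq_lintegral_of_nonneg_ae
      (Filter.Eventually.of_forall fun θ => by positivity) hPm]
  have hkey := EllipsoidAux.key_identity A
  have hfin : (∫⁻ θ : Metric.sphere (0 : EuclideanSpace ℝ (Fin 3)) 1,
      ENNReal.ofReal ‖(LinearMap.adjoint A.toLinearMap) (θ : EuclideanSpace ℝ (Fin 3))‖
      ∂(volume : Measure (EuclideanSpace ℝ (Fin 3))).toSphere) ≠ ⊤ :=
    EllipsoidAux.sphere_norm_lint_ne_top _
  have himg : E = (A.toLinearMap : EuclideanSpace ℝ (Fin 3) → EuclideanSpace ℝ (Fin 3)) ''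
      Metric.closedBall 0 1 := by rw [hE]; rfl
  have hvol : (volume E).toReal = d * (4 * π / 3) := by
    rw [himg, Measure.addHaar_image_linearMap, ENNReal.toReal_mul,
      ENNReal.toReal_ofReal hdetpos.le, EllipsoidAux.volume_ball3]
  rw [hvol, hkey, ENNReal.toReal_mul, ENNReal.toReal_ofReal hdetpos.le]
  have hπ : (0:ℝ) < π := Real.pi_pos
  have hd0 : d ≠ 0 := hdetpos.ne'
  field_simp
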